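/- Let P and Q be disjoint nonempty closed sets in Euclidean space ℝ^d and let k ≥ 2. For (k−1)-tuples (R_i, S_i)_{i=1}^{k−1} of pairs of subsets of ℝ^d with P ⊆ R_i, Q ⊆ S_i and R_i ∪ S_i = ℝ^d for all i, define F((R_i, S_i)_i) = (dom(R_{i−1}, S_{i+1}), dom(S_{i+1}, R_{i−1}))_i where R_0 = P and S_k = Q. Suppose (R⁰_i, S⁰_i)_i is such a tuple satisfying R⁰_i ⊆ R¹_i and S⁰_i ⊇ S¹_i for all i, where (R^{n+1}_i, S^{n+1}_i)_i := F((R^n_i, S^n_i)_i) for each n ∈ ℕ. Let R^∞_i = ⋃_{n∈ℕ} R^n_i and S^∞_i = ⋂_{n∈ℕ} S^n_i, with the conventions R^∞_0 = P and S^∞_k = Q. Then closure(R^∞_i) ∩ S^∞_j = ∅ whenever 0 ≤ i < j ≤ k. -/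

import Mathlib

open Metric Set

/-- The dominance region of `X` over `Y`: points at least as close to `X` as to `Y`. -/
def domReg {M : Type*} [MetricSpace M] (X Y : Set M) : Set M :=
  {z | infDist z X ≤ infDist z Y}

lemma subset_domReg {M : Type*} [MetricSpace M] (X Y : Set M) : X ⊆ domReg X Y := by
  intro x hx
  show infDist x X ≤ infDist x Y
  rw [infDist_zero_of_mem hx]
  exact infDist_nonneg

lemma domReg_mono {M : Type*} [MetricSpace M] {X X' Y Y' : Set M}
    (hX : X ⊆ X') (hXne : X.Nonempty) (hY : Y' ⊆ Y) (hYne : Y'.Nonempty) :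
    domReg X Y ⊆ domReg X' Y' := by
  intro w hw
  have hw' : infDist w X ≤ infDist w Y := hw
  have h1 : infDist w X' ≤ infDist w X := infDist_le_infDist_of_subset hX hXne
  have h2 : infDist w Y ≤ infDist w Y' := infDist_le_infDist_of_subset hY hYne
  exact le_trans h1 (le_trans hw' h2)

lemma infDist_le_of_domReg_nonempty {M : Type*} [MetricSpace M] {X Y : Set M}
    (hD : (domReg X Y).Nonempty) (z : M) :
    infDist z X ≤ infDist z Y + 2 * infDist z (domReg X Y) := by
  have h : ∀ w ∈ domReg X Y, (infDist z X - infDist z Y) / 2 ≤ dist z w := by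
    intro w hw
    have hw' : infDist w X ≤ infDist w Y := hw
    have h1 : infDist z X ≤ infDist w X + dist z w := infDist_le_infDist_add_dist
    have h3 : infDist w Y ≤ infDist z Y + dist w z := infDist_le_infDist_add_dist
    rw [dist_comm w z] at h3
    linarith
  have h2 : (infDist z X - infDist z Y) / 2 ≤ infDist z (domReg X Y) := by
    by_contra hc
    push_neg at hc
    obtain ⟨w, hw, hdw⟩ := (infDist_lt_iff hD).mp hc
    exact absurd hdw (not_lt.mpr (h w hw))
  linarith

/-- For the iterates `(R^n, S^n)` of the operator `F`, the limit sets satisfy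
`closure (R^∞ i) ∩ S^∞ j = ∅` whenever `0 ≤ i < j ≤ k`. -/
theorem iteration_limits_disjoint {d : ℕ} (k : ℕ) (hk : 2 ≤ k)
    (P Q : Set (EuclideanSpace ℝ (Fin d))) (hPne : P.Nonempty) (hQne : Q.Nonempty)
    (hPcl : IsClosed P) (hQcl : IsClosed Q) (hPQ : Disjoint P Q)
    (R S : ℕ → ℕ → Set (EuclideanSpace ℝ (Fin d)))
    -- conventions `R^n_0 = P` and `S^n_k = Q` for all `n`
    (hconv : ∀ n, R n 0 = P ∧ S n k = Q)
    -- the initial tuple belongs to the lattice `𝓛`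
    (hlat : ∀ i, 0 < i → i < k → P ⊆ R 0 i ∧ Q ⊆ S 0 i ∧ R 0 i ∪ S 0 i = univ)
    -- the iteration `(R^{n+1}, S^{n+1}) = F (R^n, S^n)`
    (hiter : ∀ n, ∀ i, 0 < i → i < k →
      R (n + 1) i = domReg (R n (i - 1)) (S n (i + 1)) ∧
      S (n + 1) i = domReg (S n (i + 1)) (R n (i - 1)))
    -- the initial tuple is below its image: `(R^0, S^0) ≤ F (R^0, S^0)`
    (hle : ∀ i, 0 < i → i < k → R 0 i ⊆ R 1 i ∧ S 1 i ⊆ S 0 i) :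
    ∀ i j, i < j → j ≤ k → closure (⋃ n, R n i) ∩ (⋂ n, S n j) = ∅ := by
  -- `P ⊆ R n l` (for `l < k`) and `Q ⊆ S n l` (for `0 < l ≤ k`)
  have hsub : ∀ n, (∀ l, l < k → P ⊆ R n l) ∧ (∀ l, 0 < l → l ≤ k → Q ⊆ S n l) := by
    intro n; induction n with
    | zero =>
      refine ⟨?_, ?_⟩
      · intro l hl
        rcases Nat.eq_zero_or_pos l with h | h
        · rw [h, (hconv 0).1]
        · exact (hlat l h hl).1
      · intro l h0 hk'
        rcases eq_or_lt_of_le hk' with h | h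
        · rw [h, (hconv 0).2]
        · exact (hlat l h0 h).2.1
    | succ n ih =>
      refine ⟨?_, ?_⟩
      · intro l hl
        rcases Nat.eq_zero_or_pos l with h | h
        · rw [h, (hconv (n + 1)).1]
        · rw [(hiter n l h hl).1]
          intro x hx
          have hxR : x ∈ R n (l - 1) := ih.1 (l - 1) (by omega) hx
          show infDist x (R n (l - 1)) ≤ infDist x (S n (l + 1))
          rw [infDist_zero_of_mem hxR]
          exact infDist_nonneg
      · intro l h0 hk'
        rcases eq_or_lt_of_le hk' with h | h
        · rw [h, (hconv (n + 1)).2]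
        · rw [(hiter n l h0 h).2]
          intro x hx
          have hxS : x ∈ S n (l + 1) := ih.2 (l + 1) (by omega) (by omega) hx
          show infDist x (S n (l + 1)) ≤ infDist x (R n (l - 1))
          rw [infDist_zero_of_mem hxS]
          exact infDist_nonneg
  have hRne : ∀ n l, l < k → (R n l).Nonempty := fun n l hl => hPne.mono ((hsub n).1 l hl)
  have hSne : ∀ n l, 0 < l → l ≤ k → (S n l).Nonempty :=
    fun n l h0 hl => hQne.mono ((hsub n).2 l h0 hl)
  -- monotonicity in `n`
  have hmono : ∀ n, (∀ l, l < k → R n l ⊆ R (n + 1) l) ∧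
      (∀ l, 0 < l → l ≤ k → S (n + 1) l ⊆ S n l) := by
    intro n; induction n with
    | zero =>
      refine ⟨?_, ?_⟩
      · intro l hl
        rcases Nat.eq_zero_or_pos l with h | h
        · rw [h, (hconv 0).1, (hconv 1).1]
        · exact (hle l h hl).1
      · intro l h0 hk'
        rcases eq_or_lt_of_le hk' with h | h
        · rw [h, (hconv 0).2, (hconv 1).2]
        · exact (hle l h0 h).2
    | succ n ih =>
      refine ⟨?_, ?_⟩
      · intro l hl
        rcases Nat.eq_zero_or_pos l with h | h
        · rw [h, (hconv (n + 1)).1, (hconv (n + 1 + 1)).1]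
        · rw [(hiter n l h hl).1, (hiter (n + 1) l h hl).1]
          exact domReg_mono (ih.1 (l - 1) (by omega)) (hRne n (l - 1) (by omega))
            (ih.2 (l + 1) (by omega) (by omega)) (hSne (n + 1) (l + 1) (by omega) (by omega))
      · intro l h0 hk'
        rcases eq_or_lt_of_le hk' with h | h
        · rw [h, (hconv (n + 1)).2, (hconv (n + 1 + 1)).2]
        · rw [(hiter n l h0 h).2, (hiter (n + 1) l h0 h).2]
          exact domReg_mono (ih.2 (l + 1) (by omega) (by omega))
            (hSne (n + 1) (l + 1) (by omega) (by omega))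
            (ih.1 (l - 1) (by omega)) (hRne n (l - 1) (by omega))
  have hmono' : ∀ l, l < k → ∀ n m, n ≤ m → R n l ⊆ R m l := by
    intro l hl n m hnm
    induction m, hnm using Nat.le_induction with
    | base => exact subset_rfl
    | succ m hm ih => exact ih.trans ((hmono m).1 l hl)
  intro i j hij hjk
  by_contra hcon
  obtain ⟨z, hzR, hzS⟩ := Set.nonempty_iff_ne_empty.mpr hcon
  have hzSn : ∀ n, z ∈ S n j := fun n => Set.mem_iInter.mp hzS n
  have hik : i < k := by omega
  -- zeroing of `infDist z (S m l)` for `l ≤ j`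
  have hB0 : ∀ t, t < j → ∀ m, t ≤ m → infDist z (S m (j - t)) = 0 := by
    intro t
    induction t with
    | zero =>
      intro _ m _
      simpa using infDist_zero_of_mem (hzSn m)
    | succ t ih =>
      intro ht m hm
      obtain ⟨m', rfl⟩ : ∃ m', m = m' + 1 := ⟨m - 1, by omega⟩
      have h0 : 0 < j - (t + 1) := by omega
      have hlk : j - (t + 1) < k := by omega
      have hEq := (hiter m' (j - (t + 1)) h0 hlk).2
      have hsubset : S m' (j - (t + 1) + 1) ⊆ S (m' + 1) (j - (t + 1)) := by
        rw [hEq]; exact subset_domReg _ _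
      have hle' : infDist z (S (m' + 1) (j - (t + 1))) ≤ infDist z (S m' (j - (t + 1) + 1)) :=
        infDist_le_infDist_of_subset hsubset (hSne m' _ (by omega) (by omega))
      have heq2 : j - (t + 1) + 1 = j - t := by omega
      rw [heq2] at hle'
      rw [ih (by omega) m' (by omega)] at hle'
      exact le_antisymm hle' infDist_nonneg
  have hB : ∀ l, 1 ≤ l → l ≤ j → ∀ m, k ≤ m → infDist z (S m l) = 0 := by
    intro l h1 h2 m hm
    have := hB0 (j - l) (by omega) m (by omega)
    rwa [show j - (j - l) = l by omega] at this
  -- the ε-argument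
  have key : ∀ ε : ℝ, 0 < ε → infDist z P ≤ 3 ^ k * ε ∧ infDist z Q ≤ 3 ^ k * ε := by
    intro ε hε
    obtain ⟨x, hx, hdx⟩ := Metric.mem_closure_iff.mp hzR ε hε
    obtain ⟨n₁, hxn⟩ := Set.mem_iUnion.mp hx
    have hbase : infDist z (R n₁ i) < ε := lt_of_le_of_lt (infDist_le_dist_of_mem hxn) hdx
    -- smallness propagates upwards along indices
    have hA0 : ∀ t, i + t < k → ∀ m, n₁ + t ≤ m → infDist z (R m (i + t)) ≤ ε := by
      intro t
      induction t with
      | zero =>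
        intro _ m hm
        have hsub' : R n₁ i ⊆ R m i := hmono' i hik n₁ m (by omega)
        have hle2 : infDist z (R m i) ≤ infDist z (R n₁ i) :=
          infDist_le_infDist_of_subset hsub' (hRne n₁ i hik)
        exact le_trans hle2 hbase.le
      | succ t ih =>
        intro ht m hm
        obtain ⟨m', rfl⟩ : ∃ m', m = m' + 1 := ⟨m - 1, by omega⟩
        have h0 : 0 < i + (t + 1) := by omega
        have hEq := (hiter m' (i + (t + 1)) h0 (by omega)).1
        have hsubset : R m' (i + (t + 1) - 1) ⊆ R (m' + 1) (i + (t + 1)) := by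
          rw [hEq]; exact subset_domReg _ _
        have heq2 : i + (t + 1) - 1 = i + t := by omega
        rw [heq2] at hsubset
        have hle' : infDist z (R (m' + 1) (i + (t + 1))) ≤ infDist z (R m' (i + t)) :=
          infDist_le_infDist_of_subset hsubset (hRne m' (i + t) (by omega))
        exact le_trans hle' (ih (by omega) m' (by omega))
    have hA : ∀ l, i ≤ l → l < k → ∀ m, n₁ + k ≤ m → infDist z (R m l) ≤ ε := by
      intro l h1 h2 m hm
      have := hA0 (l - i) (by omega) m (by omega)
      rwa [show i + (l - i) = l by omega] at this
    have h3pos : ∀ t : ℕ, (1 : ℝ) ≤ 3 ^ t := fun t => one_le_pow₀ (by norm_num)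
    -- propagate upwards to reach `Q`
    have claim1 : ∀ t, j + t ≤ k → ∀ m, n₁ + k ≤ m → infDist z (S m (j + t)) ≤ 3 ^ t * ε := by
      intro t
      induction t with
      | zero =>
        intro _ m hm
        rw [show j + 0 = j by omega, hB j (by omega) le_rfl m (by omega)]
        simpa using le_of_lt hε
      | succ t ih =>
        intro ht m hm
        have h0 : 0 < j + t := by omega
        have hlk : j + t < k := by omega
        have hEq := (hiter m (j + t) h0 hlk).2
        have hDne : (domReg (S m (j + t + 1)) (R m (j + t - 1))).Nonempty := by
          rw [← hEq]; exact hSne (m + 1) (j + t) (by omega) (by omega)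
        have hkey := infDist_le_of_domReg_nonempty hDne z
        rw [← hEq] at hkey
        have h1 : infDist z (R m (j + t - 1)) ≤ ε := hA (j + t - 1) (by omega) (by omega) m hm
        have h2 : infDist z (S (m + 1) (j + t)) ≤ 3 ^ t * ε := ih (by omega) (m + 1) (by omega)
        have h3 := h3pos t
        have hgoal : infDist z (S m (j + t + 1)) ≤ 3 ^ (t + 1) * ε := by
          rw [pow_succ]
          nlinarith
        rwa [show j + (t + 1) = j + t + 1 by omega]
    -- propagate downwards to reach `P`
    have claim2 : ∀ t, t ≤ i → ∀ m, n₁ + k ≤ m → infDist z (R m (i - t)) ≤ 3 ^ t * ε := by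
      intro t
      induction t with
      | zero =>
        intro _ m hm
        have := hA i le_rfl hik m hm
        simpa using le_trans this (by nlinarith [h3pos 0])
      | succ t ih =>
        intro ht m hm
        have h0 : 0 < i - t := by omega
        have hlk : i - t < k := by omega
        have hEq := (hiter m (i - t) h0 hlk).1
        have hDne : (domReg (R m (i - t - 1)) (S m (i - t + 1))).Nonempty := by
          rw [← hEq]; exact hRne (m + 1) (i - t) hlk
        have hkey := infDist_le_of_domReg_nonempty hDne z
        rw [← hEq] at hkey
        have h1 : infDist z (S m (i - t + 1)) = 0 :=
          hB (i - t + 1) (by omega) (by omega) m (by omega)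
        have h2 : infDist z (R (m + 1) (i - t)) ≤ 3 ^ t * ε := ih (by omega) (m + 1) (by omega)
        have h3 := h3pos t
        have hgoal : infDist z (R m (i - t - 1)) ≤ 3 ^ (t + 1) * ε := by
          rw [pow_succ]
          nlinarith
        rwa [show i - (t + 1) = i - t - 1 by omega]
    constructor
    · have := claim2 i le_rfl (n₁ + k) le_rfl
      rw [show i - i = 0 by omega, (hconv (n₁ + k)).1] at this
      refine le_trans this ?_
      have : (3 : ℝ) ^ i ≤ 3 ^ k := pow_le_pow_right₀ (by norm_num) (by omega)
      nlinarith
    · have := claim1 (k - j) (by omega) (n₁ + k) le_rfl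
      rw [show j + (k - j) = k by omega, (hconv (n₁ + k)).2] at this
      refine le_trans this ?_
      have : (3 : ℝ) ^ (k - j) ≤ 3 ^ k := pow_le_pow_right₀ (by norm_num) (by omega)
      nlinarith
  -- conclude `infDist z P = 0` and `infDist z Q = 0`
  have h3k : (0 : ℝ) < 3 ^ k := by positivity
  have hp0 : infDist z P = 0 := by
    refine le_antisymm ?_ infDist_nonneg
    by_contra hcon'
    push_neg at hcon'
    have hkey := (key (infDist z P / (2 * 3 ^ k)) (by positivity)).1
    have heq : (3 : ℝ) ^ k * (infDist z P / (2 * 3 ^ k)) = infDist z P / 2 := by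
      field_simp
    rw [heq] at hkey
    linarith
  have hq0 : infDist z Q = 0 := by
    refine le_antisymm ?_ infDist_nonneg
    by_contra hcon'
    push_neg at hcon'
    have hkey := (key (infDist z Q / (2 * 3 ^ k)) (by positivity)).2
    have heq : (3 : ℝ) ^ k * (infDist z Q / (2 * 3 ^ k)) = infDist z Q / 2 := by
      field_simp
    rw [heq] at hkey
    linarith
  have hzP : z ∈ P := by
    have := (mem_closure_iff_infDist_zero hPne).mpr hp0
    rwa [hPcl.closure_eq] at this
  have hzQ : z ∈ Q := by
    have := (mem_closure_iff_infDist_zero hQne).mpr hq0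
    rwa [hQcl.closure_eq] at this
  exact Set.disjoint_left.mp hPQ hzP hzQ
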